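/- arXiv:2006.14972 — 9 statements merged into one kernel-verified Lean document; each statement's English description precedes it below -/
import Mathlib

section
/- A graph G is a 2-club cluster graph (i.e., every connected component of G has diameter at most 2) if and only if G contains no restricted P4, where a restricted P4 is a path s-t-u-v on four distinct vertices such that the distance between s and v in G equals 3. -/
open SimpleGraph

/-- A 2-club cluster graph: every connected component has diameter at most 2. -/
def IsTwoClubCluster {V : Type*} (G : SimpleGraph V) : Prop :=
  ∀ x y : V, G.Reachable x y → G.dist x y ≤ 2

/-- A 2-club: a graph of diameter at most 2, i.e. every two distinct vertices are
adjacent or have a common neighbor. -/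
def IsTwoClub {V : Type*} (G : SimpleGraph V) : Prop :=
  ∀ x y : V, x ≠ y → G.Adj x y ∨ ∃ z, G.Adj x z ∧ G.Adj y z

/-- A restricted P4: a path s-t-u-v on four distinct vertices with dist(s,v) = 3. -/
def IsRestrictedP4 {V : Type*} (G : SimpleGraph V) (s t u v : V) : Prop :=
  s ≠ t ∧ s ≠ u ∧ s ≠ v ∧ t ≠ u ∧ t ≠ v ∧ u ≠ v ∧
  G.Adj s t ∧ G.Adj t u ∧ G.Adj u v ∧ G.dist s v = 3

theorem stmt0 {V : Type*} [Fintype V] (G : SimpleGraph V) :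
    IsTwoClubCluster G ↔ ¬ ∃ s t u v : V, IsRestrictedP4 G s t u v := by
  constructor
  · rintro h ⟨s, t, u, v, _, _, _, _, _, _, hst, htu, huv, hd⟩
    have hr : G.Reachable s v :=
      ⟨Walk.cons hst (Walk.cons htu (Walk.cons huv Walk.nil))⟩
    have := h s v hr
    omega
  · intro h x y hxy
    by_contra hgt
    push_neg at hgt
    obtain ⟨p, hp, hlen⟩ := hxy.exists_path_of_dist
    have h3 : 3 ≤ p.length := by omega
    match p, hp, hlen, h3 with
    | Walk.cons (v := b) hab (Walk.cons (v := c) hbc (Walk.cons (v := d) hcd q)),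
        hp, hlen, h3 =>
      -- distances
      have hqlen : q.length = G.dist x y - 3 := by
        simp only [Walk.length_cons] at hlen; omega
      have hdle : G.dist x d ≤ 3 := by
        have := G.dist_le (Walk.cons hab (Walk.cons hbc (Walk.cons hcd Walk.nil)))
        simpa using this
      have hdge : 3 ≤ G.dist x d := by
        by_contra hk
        push_neg at hk
        have hrxd : G.Reachable x d :=
          ⟨Walk.cons hab (Walk.cons hbc (Walk.cons hcd Walk.nil))⟩
        obtain ⟨r, hrp, hrlen⟩ := hrxd.exists_path_of_dist
        have := G.dist_le (r.append q)
        rw [Walk.length_append] at this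
        omega
      have hdist : G.dist x d = 3 := le_antisymm hdle hdge
      -- distinctness from the path
      rw [Walk.isPath_def] at hp
      simp only [Walk.support_cons, List.nodup_cons, List.mem_cons] at hp
      have hxb : x ≠ b := by rintro rfl; exact hp.1 (Or.inl rfl)
      have hxc : x ≠ c := by
        rintro rfl; exact hp.1 (Or.inr (Or.inl rfl))
      have hxd : x ≠ d := by
        rintro rfl
        exact hp.1 (Or.inr (Or.inr (Walk.start_mem_support q)))
      have hbc' : b ≠ c := by rintro rfl; exact hp.2.1 (Or.inl rfl)
      have hbd : b ≠ d := by
        rintro rfl; exact hp.2.1 (Or.inr (Walk.start_mem_support q))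
      have hcd' : c ≠ d := by
        rintro rfl; exact hp.2.2.1 (Walk.start_mem_support q)
      exact h ⟨x, b, c, d, hxb, hxc, hxd, hbc', hbd, hcd', hab, hbc, hcd, hdist⟩
end

section
/- If a graph G is a 2-club and contains two vertices u and v that are twins (that is, N[u]=N[v] or N(u)=N(v)), then the graph obtained by deleting v from G is still a 2-club. -/
open SimpleGraph

theorem stmt1 {V : Type*} [Fintype V] (G : SimpleGraph V) (u v : V) (huv : u ≠ v)
    (htwin : (({u} : Set V) ∪ G.neighborSet u = ({v} : Set V) ∪ G.neighborSet v) ∨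
      G.neighborSet u = G.neighborSet v)
    (h2 : IsTwoClub G) :
    IsTwoClub (G.induce {x : V | x ≠ v}) := by
  intro x y hxy
  have hxy' : (x : V) ≠ (y : V) := fun h => hxy (Subtype.ext h)
  rcases h2 x y hxy' with hadj | ⟨z, hxz, hyz⟩
  · left; exact hadj
  · by_cases hz : z = v
    · subst hz
      rcases htwin with hclosed | hopen
      · have hx : (x : V) ∈ ({u} : Set V) ∪ G.neighborSet u := by
          rw [hclosed]; right; exact hxz.symm
        have hy : (y : V) ∈ ({u} : Set V) ∪ G.neighborSet u := by
          rw [hclosed]; right; exact hyz.symm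
        rcases hx with hx | hx
        · rcases hy with hy | hy
          · exact absurd (hx.trans hy.symm) hxy'
          · left
            show G.Adj (x : V) (y : V)
            rw [hx]; exact hy
        · rcases hy with hy | hy
          · left
            show G.Adj (x : V) (y : V)
            rw [hy]; exact hx.symm
          · right
            exact ⟨⟨u, huv⟩, hx.symm, hy.symm⟩
      · have hx : (x : V) ∈ G.neighborSet u := by rw [hopen]; exact hxz.symm
        have hy : (y : V) ∈ G.neighborSet u := by rw [hopen]; exact hyz.symm
        right
        exact ⟨⟨u, huv⟩, hx.symm, hy.symm⟩
    · right
      exact ⟨⟨z, hz⟩, hxz, hyz⟩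
end

section
/- Let G=(V,E) be a graph, w: V → ℕ⁺ a weight function, and P a set of restricted P4's in G such that each vertex v ∈ V is contained in at most w(v) many paths of P. Then any 2-club vertex deletion set S of G (a set of vertices whose deletion leaves a 2-club cluster graph) satisfies w(S) ≥ |P|, where w(S) is the sum of the weights of vertices in S. -/
open SimpleGraph

theorem stmt4 {V : Type*} [Fintype V] [DecidableEq V] (G : SimpleGraph V)
    (w : V → ℕ) (hw : ∀ x, 1 ≤ w x)
    (P : Finset (V × V × V × V))
    (hP : ∀ p ∈ P, IsRestrictedP4 G p.1 p.2.1 p.2.2.1 p.2.2.2)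
    (hcnt : ∀ x : V,
      (P.filter (fun p => x = p.1 ∨ x = p.2.1 ∨ x = p.2.2.1 ∨ x = p.2.2.2)).card ≤ w x)
    (S : Finset V) (hS : IsTwoClubCluster (G.induce ((↑S : Set V)ᶜ))) :
    P.card ≤ ∑ x ∈ S, w x := by
  -- every path in P meets S
  have key : ∀ p ∈ P, p.1 ∈ S ∨ p.2.1 ∈ S ∨ p.2.2.1 ∈ S ∨ p.2.2.2 ∈ S := by
    intro p hp
    by_contra h
    push_neg at h
    obtain ⟨hs, ht, hu, hv⟩ := h
    obtain ⟨_, _, _, _, _, _, hst, htu, huv, hdist⟩ := hP p hp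
    set T : Set V := (↑S : Set V)ᶜ
    have hsT : p.1 ∈ T := hs
    have htT : p.2.1 ∈ T := ht
    have huT : p.2.2.1 ∈ T := hu
    have hvT : p.2.2.2 ∈ T := hv
    set G' := G.induce T
    have h1 : G'.Adj ⟨p.1, hsT⟩ ⟨p.2.1, htT⟩ := hst
    have h2 : G'.Adj ⟨p.2.1, htT⟩ ⟨p.2.2.1, huT⟩ := htu
    have h3 : G'.Adj ⟨p.2.2.1, huT⟩ ⟨p.2.2.2, hvT⟩ := huv
    have hr : G'.Reachable ⟨p.1, hsT⟩ ⟨p.2.2.2, hvT⟩ :=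
      (h1.reachable.trans h2.reachable).trans h3.reachable
    have hd := hS _ _ hr
    obtain ⟨q, hq⟩ := hr.exists_walk_length_eq_dist
    have : G.dist p.1 p.2.2.2 ≤ 2 := by
      calc G.dist p.1 p.2.2.2 ≤ (q.map (SimpleGraph.Embedding.induce T).toHom).length :=
            SimpleGraph.dist_le _
        _ = q.length := SimpleGraph.Walk.length_map _ _
        _ ≤ 2 := hq ▸ hd
    omega
  calc P.card ≤ (S.biUnion (fun x =>
        P.filter (fun p => x = p.1 ∨ x = p.2.1 ∨ x = p.2.2.1 ∨ x = p.2.2.2))).card := by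
        apply Finset.card_le_card
        intro p hp
        rcases key p hp with h | h | h | h
        · exact Finset.mem_biUnion.2 ⟨p.1, h, Finset.mem_filter.2 ⟨hp, Or.inl rfl⟩⟩
        · exact Finset.mem_biUnion.2 ⟨p.2.1, h, Finset.mem_filter.2 ⟨hp, Or.inr (Or.inl rfl)⟩⟩
        · exact Finset.mem_biUnion.2 ⟨p.2.2.1, h,
            Finset.mem_filter.2 ⟨hp, Or.inr (Or.inr (Or.inl rfl))⟩⟩
        · exact Finset.mem_biUnion.2 ⟨p.2.2.2, h,
            Finset.mem_filter.2 ⟨hp, Or.inr (Or.inr (Or.inr rfl))⟩⟩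
    _ ≤ ∑ x ∈ S, (P.filter (fun p => x = p.1 ∨ x = p.2.1 ∨ x = p.2.2.1 ∨ x = p.2.2.2)).card :=
        Finset.card_biUnion_le
    _ ≤ ∑ x ∈ S, w x := Finset.sum_le_sum (fun x _ => hcnt x)
end

section
/- Let G be a connected graph with positive vertex weights w, let C be a maximum-weight vertex set inducing a 2-club in G, and let D be a minimum-weight vertex cut set of G. Then every 2-club vertex deletion set S of G satisfies w(S) ≥ min(w(V∖C), w(D)). -/
open SimpleGraph

lemma twoClub_of_cluster {V : Type*} (G : SimpleGraph V) (h : IsTwoClubCluster G)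
    (hp : G.Preconnected) : IsTwoClub G := by
  intro x y hxy
  have hr := hp x y
  obtain ⟨p, hp2⟩ := hr.exists_walk_length_eq_dist
  have hd : p.length ≤ 2 := hp2 ▸ h x y hr
  match p with
  | SimpleGraph.Walk.nil => exact absurd rfl hxy
  | SimpleGraph.Walk.cons h1 SimpleGraph.Walk.nil => exact Or.inl h1
  | SimpleGraph.Walk.cons h1 (SimpleGraph.Walk.cons h2 SimpleGraph.Walk.nil) =>
      exact Or.inr ⟨_, h1, h2.symm⟩
  | SimpleGraph.Walk.cons _ (SimpleGraph.Walk.cons _ (SimpleGraph.Walk.cons _ _)) =>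
      simp [SimpleGraph.Walk.length_cons] at hd

/-- A vertex cut set: removing it disconnects the graph. -/
def IsCutSet {V : Type*} (G : SimpleGraph V) (D : Set V) : Prop :=
  ¬ (G.induce Dᶜ).Preconnected

theorem stmt5 {V : Type*} [Fintype V] [DecidableEq V] (G : SimpleGraph V)
    (hG : G.Connected)
    (w : V → ℕ) (hw : ∀ x, 1 ≤ w x)
    (C : Finset V) (hC : IsTwoClub (G.induce (↑C : Set V)))
    (hCmax : ∀ C' : Finset V, IsTwoClub (G.induce (↑C' : Set V)) →
      ∑ x ∈ C', w x ≤ ∑ x ∈ C, w x)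
    (D : Finset V) (hD : IsCutSet G ↑D)
    (hDmin : ∀ D' : Finset V, IsCutSet G ↑D' → ∑ x ∈ D, w x ≤ ∑ x ∈ D', w x)
    (S : Finset V) (hS : IsTwoClubCluster (G.induce ((↑S : Set V)ᶜ))) :
    min (∑ x ∈ Cᶜ, w x) (∑ x ∈ D, w x) ≤ ∑ x ∈ S, w x := by
  by_cases hpre : (G.induce ((↑S : Set V)ᶜ)).Preconnected
  · have h2c : IsTwoClub (G.induce ((↑(Sᶜ) : Set V))) := by
      rw [Finset.coe_compl]
      exact twoClub_of_cluster _ hS hpre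
    have hle := hCmax Sᶜ h2c
    have h1 := Finset.sum_add_sum_compl C w
    have h2 := Finset.sum_add_sum_compl S w
    exact le_trans (min_le_left _ _) (by omega)
  · exact le_trans (min_le_right _ _) (hDmin S hpre)
end

section
/- Let G=(V,E) be a graph, v ∈ V, k ∈ ℕ, w: V → ℕ⁺ a weight function, and P a set of restricted P4's of G each containing v, such that every vertex u ≠ v is contained in at most w(u) many paths of P. If |P| ≥ k+1, then every 2-club vertex deletion set S with w(S) ≤ k must contain v. -/
open SimpleGraph

theorem stmt7 {V : Type*} [Fintype V] [DecidableEq V] (G : SimpleGraph V) (v : V) (k : ℕ)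
    (w : V → ℕ) (hw : ∀ x, 1 ≤ w x)
    (P : Finset (V × V × V × V))
    (hP : ∀ p ∈ P, IsRestrictedP4 G p.1 p.2.1 p.2.2.1 p.2.2.2)
    (hvP : ∀ p ∈ P, v = p.1 ∨ v = p.2.1 ∨ v = p.2.2.1 ∨ v = p.2.2.2)
    (hcnt : ∀ u : V, u ≠ v →
      (P.filter (fun p => u = p.1 ∨ u = p.2.1 ∨ u = p.2.2.1 ∨ u = p.2.2.2)).card ≤ w u)
    (hcard : k + 1 ≤ P.card)
    (S : Finset V) (hS : IsTwoClubCluster (G.induce ((↑S : Set V)ᶜ)))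
    (hwS : ∑ x ∈ S, w x ≤ k) :
    v ∈ S := by

  by_contra hv
  -- every path in P contains a vertex of S
  have key : ∀ p ∈ P, ∃ u ∈ S, u = p.1 ∨ u = p.2.1 ∨ u = p.2.2.1 ∨ u = p.2.2.2 := by
    intro p hp
    by_contra hcon
    push_neg at hcon
    obtain ⟨_, _, _, _, _, _, hst, htu, huv, hdist⟩ := hP p hp
    have hs : p.1 ∈ ((↑S : Set V)ᶜ) := fun h => (hcon p.1 h).1 rfl
    have ht : p.2.1 ∈ ((↑S : Set V)ᶜ) := fun h => (hcon p.2.1 h).2.1 rfl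
    have hu : p.2.2.1 ∈ ((↑S : Set V)ᶜ) := fun h => (hcon p.2.2.1 h).2.2.1 rfl
    have hv' : p.2.2.2 ∈ ((↑S : Set V)ᶜ) := fun h => (hcon p.2.2.2 h).2.2.2 rfl
    set H := G.induce ((↑S : Set V)ᶜ)
    have hadj1 : H.Adj ⟨p.1, hs⟩ ⟨p.2.1, ht⟩ := hst
    have hadj2 : H.Adj ⟨p.2.1, ht⟩ ⟨p.2.2.1, hu⟩ := htu
    have hadj3 : H.Adj ⟨p.2.2.1, hu⟩ ⟨p.2.2.2, hv'⟩ := huv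
    have hreach : H.Reachable ⟨p.1, hs⟩ ⟨p.2.2.2, hv'⟩ :=
      (hadj1.reachable.trans hadj2.reachable).trans hadj3.reachable
    obtain ⟨q, hq⟩ := hreach.exists_walk_length_eq_dist
    have hq2 : q.length ≤ 2 := hq ▸ hS _ _ hreach
    have : G.dist p.1 p.2.2.2 ≤ 2 := by
      have h1 := SimpleGraph.dist_le (q.map (Embedding.induce ((↑S : Set V)ᶜ)).toHom)
      rw [SimpleGraph.Walk.length_map] at h1
      simpa using h1.trans hq2
    omega
  have hsub : P ⊆ S.biUnion (fun u => P.filter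
      (fun p => u = p.1 ∨ u = p.2.1 ∨ u = p.2.2.1 ∨ u = p.2.2.2)) := by
    intro p hp
    obtain ⟨u, hu, h⟩ := key p hp
    exact Finset.mem_biUnion.mpr ⟨u, hu, Finset.mem_filter.mpr ⟨hp, h⟩⟩
  have := calc k + 1 ≤ P.card := hcard
    _ ≤ (S.biUnion _).card := Finset.card_le_card hsub
    _ ≤ ∑ u ∈ S, (P.filter
        (fun p => u = p.1 ∨ u = p.2.1 ∨ u = p.2.2.1 ∨ u = p.2.2.2)).card :=
      Finset.card_biUnion_le
    _ ≤ ∑ u ∈ S, w u := Finset.sum_le_sum (fun u hu => hcnt u (fun h => hv (h ▸ hu)))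
    _ ≤ k := hwS
  omega
end

section
/- Let (G,k,w) be an instance of weighted 2-club cluster vertex deletion and let u,v be distinct vertices with N[u]=N[v] or N(u)=N(v). Let G'=G−v and define w' to agree with w except w'(u)=w(u)+w(v). Then G has a 2-club vertex deletion set S with w(S) ≤ k if and only if G' has a 2-club vertex deletion set S' with w'(S') ≤ k. -/
open SimpleGraph

lemma tcc_iff {V : Type*} (G : SimpleGraph V) :
    IsTwoClubCluster G ↔ ∀ x y : V, G.Reachable x y →
      x = y ∨ G.Adj x y ∨ ∃ z, G.Adj x z ∧ G.Adj z y := by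
  constructor
  · intro h x y hr
    obtain ⟨p, hp⟩ := hr.exists_walk_length_eq_dist
    have h2 := h x y hr
    rw [← hp] at h2
    match p, h2 with
    | SimpleGraph.Walk.nil, _ => exact Or.inl rfl
    | SimpleGraph.Walk.cons h SimpleGraph.Walk.nil, _ => exact Or.inr (Or.inl h)
    | SimpleGraph.Walk.cons h1 (SimpleGraph.Walk.cons h2 SimpleGraph.Walk.nil), _ =>
        exact Or.inr (Or.inr ⟨_, h1, h2⟩)
    | SimpleGraph.Walk.cons _ (SimpleGraph.Walk.cons _ (SimpleGraph.Walk.cons _ _)), hle =>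
        exact absurd hle (by simp [SimpleGraph.Walk.length_cons])
  · intro h x y hr
    rcases h x y hr with rfl | hadj | ⟨z, h1, h2⟩
    · exact le_trans (le_of_eq (SimpleGraph.dist_self)) (by omega)
    · calc G.dist x y ≤ (SimpleGraph.Walk.cons hadj SimpleGraph.Walk.nil).length := dist_le _
        _ ≤ 2 := by simp
    · calc G.dist x y ≤
          (SimpleGraph.Walk.cons h1 (SimpleGraph.Walk.cons h2 SimpleGraph.Walk.nil)).length :=
            dist_le _
        _ ≤ 2 := by simp

/-- A "pseudo-homomorphism" (each edge maps to an edge or is collapsed) preserves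
reachability. -/
lemma reach_map {α β : Type*} {H : SimpleGraph α} {K : SimpleGraph β} (f : α → β)
    (hf : ∀ a b, H.Adj a b → f a = f b ∨ K.Adj (f a) (f b)) {a b : α}
    (h : H.Reachable a b) : K.Reachable (f a) (f b) := by
  obtain ⟨p⟩ := h
  induction p with
  | nil => exact Reachable.refl _
  | cons hadj p ih =>
    rcases hf _ _ hadj with heq | hK
    · rw [heq]; exact ih
    · exact (hK.reachable).trans ih

lemma exists_adj_of_reachable {α : Type*} {H : SimpleGraph α} {a b : α}
    (h : H.Reachable a b) (hne : a ≠ b) : ∃ c, H.Adj a c := by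
  obtain ⟨p⟩ := h
  cases p with
  | nil => exact absurd rfl hne
  | cons h _ => exact ⟨_, h⟩

lemma tcc_iso {α β : Type*} {H : SimpleGraph α} {K : SimpleGraph β} (e : H ≃g K)
    (h : IsTwoClubCluster H) : IsTwoClubCluster K := by
  rw [tcc_iff] at h ⊢
  intro x y hr
  have hr' : H.Reachable (e.symm x) (e.symm y) := hr.map e.symm.toHom
  rcases h _ _ hr' with heq | hadj | ⟨z, h1, h2⟩
  · exact Or.inl (by simpa using congrArg e heq)
  · refine Or.inr (Or.inl ?_)
    have := e.map_adj_iff.mpr hadj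
    simpa using this
  · refine Or.inr (Or.inr ⟨e z, ?_, ?_⟩)
    · have := e.map_adj_iff.mpr h1; simpa using this
    · have := e.map_adj_iff.mpr h2; simpa using this

/-- Nested induced subgraphs flatten. -/
lemma tcc_induce_induce {V : Type*} (G : SimpleGraph V) (s : Set V) (C : Set s) :
    IsTwoClubCluster ((G.induce s).induce C) ↔
      IsTwoClubCluster (G.induce {x : V | ∃ h : x ∈ s, (⟨x, h⟩ : s) ∈ C}) := by
  have e : (G.induce s).induce C ≃g G.induce {x : V | ∃ h : x ∈ s, (⟨x, h⟩ : s) ∈ C} := by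
    refine ⟨⟨fun a => ⟨a.1.1, a.1.2, a.2⟩,
      fun b => ⟨⟨b.1, b.2.choose⟩, b.2.choose_spec⟩, ?_, ?_⟩, ?_⟩
    · intro a; apply Subtype.ext; apply Subtype.ext; rfl
    · intro b; apply Subtype.ext; rfl
    · intro a b; simp
  exact ⟨tcc_iso e, tcc_iso e.symm⟩

section Twins

variable {V : Type*} (G : SimpleGraph V) (u v : V)

/-- Deleting the twin `v` while keeping `u` preserves the 2-club cluster property. -/
lemma tcc_del_twin (huv : u ≠ v)
    (twin : ∀ x, x ≠ u → x ≠ v → (G.Adj u x ↔ G.Adj v x))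
    (A : Set V) (hu : u ∈ A) (hv : v ∈ A)
    (h : IsTwoClubCluster (G.induce A)) :
    IsTwoClubCluster (G.induce (A \ {v})) := by
  rw [tcc_iff] at h ⊢
  rintro ⟨x, hx⟩ ⟨y, hy⟩ hr
  have hxA : x ∈ A := hx.1
  have hyA : y ∈ A := hy.1
  have hxv : x ≠ v := by simpa using hx.2
  have hyv : y ≠ v := by simpa using hy.2
  by_cases hxy : x = y
  · exact Or.inl (Subtype.ext hxy)
  have hr' : (G.induce A).Reachable ⟨x, hxA⟩ ⟨y, hyA⟩ :=
    reach_map (fun z : ↥(A \ {v}) => (⟨z.1, z.2.1⟩ : ↥A))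
      (fun a b hab => Or.inr (by simpa using hab)) hr
  rcases h _ _ hr' with heq | hadj | ⟨⟨z, hzA⟩, h1, h2⟩
  · exact absurd (congrArg Subtype.val heq) hxy
  · exact Or.inr (Or.inl (by simpa using hadj))
  · simp only [comap_adj, Function.Embedding.coe_subtype] at h1 h2
    by_cases hz : z = v
    · subst hz
      -- x - v - y ; replace v by u
      by_cases hxu : x = u
      · have hyu : y ≠ u := fun h => hxy (hxu.trans h.symm)
        have hA : G.Adj x y := by
          rw [hxu]; exact (twin y hyu hyv).mpr h2
        exact Or.inr (Or.inl (by simpa using hA))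
      · by_cases hyu : y = u
        · have hA : G.Adj x y := by
            rw [hyu]; exact ((twin x hxu hxv).mpr h1.symm).symm
          exact Or.inr (Or.inl (by simpa using hA))
        · refine Or.inr (Or.inr ⟨⟨u, hu, by simpa using huv⟩, ?_, ?_⟩)
          · simpa using ((twin x hxu hxv).mpr h1.symm).symm
          · simpa using (twin y hyu hyv).mpr h2
    · exact Or.inr (Or.inr ⟨⟨z, hzA, by simpa using hz⟩, by simpa using h1, by simpa using h2⟩)

/-- Adding the twin `v` back next to `u` preserves the 2-club cluster property. -/
lemma tcc_add_twin (huv : u ≠ v)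
    (twin : ∀ x, x ≠ u → x ≠ v → (G.Adj u x ↔ G.Adj v x))
    (A : Set V) (hu : u ∈ A) (hv : v ∉ A)
    (h : IsTwoClubCluster (G.induce A)) :
    IsTwoClubCluster (G.induce (A ∪ {v})) := by
  classical
  rw [tcc_iff] at h ⊢
  have memA : ∀ z : V, z ∈ A ∪ ({v} : Set V) → z ≠ v → z ∈ A := by
    intro z hz hzv
    rcases hz with hz | hz
    · exact hz
    · exact absurd hz hzv
  -- the collapsing map
  set f : ↥(A ∪ ({v} : Set V)) → ↥A :=
    fun z => if hz : (z : V) = v then ⟨u, hu⟩ else ⟨z.1, memA z.1 z.2 hz⟩ with hf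
  have hfne : ∀ (z : ↥(A ∪ ({v} : Set V))) (hz : (z : V) ≠ v), f z = ⟨z.1, memA z.1 z.2 hz⟩ := by
    intro z hz; simp [hf, hz]
  have hfv : ∀ (z : ↥(A ∪ ({v} : Set V))), (z : V) = v → f z = ⟨u, hu⟩ := by
    intro z hz; simp [hf, hz]
  have hhom : ∀ a b, (G.induce (A ∪ {v})).Adj a b → f a = f b ∨ (G.induce A).Adj (f a) (f b) := by
    intro a b hab
    have hab' : G.Adj a.1 b.1 := by simpa using hab
    by_cases hav : (a : V) = v
    · have hbv : (b : V) ≠ v := by intro hbv; rw [hav, hbv] at hab'; exact hab'.ne rfl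
      rw [hfv a hav, hfne b hbv]
      by_cases hbu : (b : V) = u
      · exact Or.inl (Subtype.ext (by simp [hbu]))
      · refine Or.inr ?_
        have : G.Adj u b.1 := (twin b.1 hbu hbv).mpr (by rwa [hav] at hab')
        simpa using this
    · by_cases hbv : (b : V) = v
      · rw [hfv b hbv, hfne a hav]
        by_cases hau : (a : V) = u
        · exact Or.inl (Subtype.ext (by simp [hau]))
        · refine Or.inr ?_
          have : G.Adj a.1 u := ((twin a.1 hau hav).mpr (by rw [hbv] at hab'; exact hab'.symm)).symm
          simpa using this
      · rw [hfne a hav, hfne b hbv]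
        exact Or.inr (by simpa using hab')
  -- main: conclusion when the first vertex is v
  have main : ∀ (a b : ↥(A ∪ ({v} : Set V))), (G.induce (A ∪ {v})).Reachable a b →
      (a : V) ≠ (b : V) → (a : V) = v →
      (G.induce (A ∪ {v})).Adj a b ∨
        ∃ z, (G.induce (A ∪ {v})).Adj a z ∧ (G.induce (A ∪ {v})).Adj z b := by
    intro a b hr hab hav
    have hbv : (b : V) ≠ v := fun hbv => hab (hav.trans hbv.symm)
    by_cases hbu : (b : V) = u
    · -- a = v, b = u : use the first step of a walk from v to u
      by_cases hadj : G.Adj u v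
      · refine Or.inl ?_
        simp only [comap_adj, Function.Embedding.coe_subtype, hav, hbu]
        exact hadj.symm
      · obtain ⟨c, hc⟩ := exists_adj_of_reachable hr (fun h => hab (congrArg Subtype.val h))
        have hc' : G.Adj v c.1 := by simpa [hav] using hc
        have hcv : (c : V) ≠ v := fun h => (h ▸ hc').ne rfl
        have hcu : (c : V) ≠ u := fun h => hadj (h ▸ hc').symm
        refine Or.inr ⟨c, hc, ?_⟩
        have : G.Adj c.1 u := ((twin c.1 hcu hcv).mpr hc').symm
        simp only [comap_adj, Function.Embedding.coe_subtype, hbu]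
        exact this
    · -- a = v, b ∉ {u, v}
      have hr' : (G.induce A).Reachable (f a) (f b) := reach_map f hhom hr
      rw [hfv a hav, hfne b hbv] at hr'
      rcases h _ _ hr' with heq | hadj | ⟨⟨z, hzA⟩, h1, h2⟩
      · exact absurd (congrArg Subtype.val heq) (Ne.symm hbu)
      · have : G.Adj u b.1 := by simpa using hadj
        refine Or.inl ?_
        simp only [comap_adj, Function.Embedding.coe_subtype, hav]
        exact (twin b.1 hbu hbv).mp this
      · simp only [comap_adj, Function.Embedding.coe_subtype] at h1 h2
        have hzv : z ≠ v := fun h => hv (h ▸ hzA)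
        have hzu : z ≠ u := fun h => (h ▸ h1).ne rfl
        refine Or.inr ⟨⟨z, Or.inl hzA⟩, ?_, ?_⟩
        · simp only [comap_adj, Function.Embedding.coe_subtype, hav]
          exact (twin z hzu hzv).mp h1
        · simpa using h2
  intro a b hr
  by_cases hab : (a : V) = (b : V)
  · exact Or.inl (Subtype.ext hab)
  by_cases hav : (a : V) = v
  · exact Or.inr (main a b hr hab hav)
  by_cases hbv : (b : V) = v
  · rcases main b a hr.symm (fun h => hab h.symm) hbv with hadj | ⟨z, h1, h2⟩
    · exact Or.inr (Or.inl hadj.symm)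
    · exact Or.inr (Or.inr ⟨z, h2.symm, h1.symm⟩)
  · have hr' : (G.induce A).Reachable (f a) (f b) := reach_map f hhom hr
    rw [hfne a hav, hfne b hbv] at hr'
    rcases h _ _ hr' with heq | hadj | ⟨⟨z, hzA⟩, h1, h2⟩
    · exact absurd (congrArg Subtype.val heq) hab
    · exact Or.inr (Or.inl (by simpa using hadj))
    · simp only [comap_adj, Function.Embedding.coe_subtype] at h1 h2
      exact Or.inr (Or.inr ⟨⟨z, Or.inl hzA⟩, by simpa using h1, by simpa using h2⟩)

end Twins

theorem stmt8 {V : Type*} [Fintype V] [DecidableEq V] (G : SimpleGraph V) (k : ℕ)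
    (w : V → ℕ) (hw : ∀ x, 1 ≤ w x) (u v : V) (huv : u ≠ v)
    (htwin : (({u} : Set V) ∪ G.neighborSet u = ({v} : Set V) ∪ G.neighborSet v) ∨
      G.neighborSet u = G.neighborSet v) :
    (∃ S : Finset V, IsTwoClubCluster (G.induce ((↑S : Set V)ᶜ)) ∧ ∑ x ∈ S, w x ≤ k) ↔
    (∃ S' : Finset {x : V // x ≠ v},
      IsTwoClubCluster ((G.induce {x : V | x ≠ v}).induce ({y | y ∈ S'}ᶜ)) ∧
      ∑ x ∈ S', (if (x : V) = u then w u + w v else w (x : V)) ≤ k) := by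
  classical
  have twin : ∀ x, x ≠ u → x ≠ v → (G.Adj u x ↔ G.Adj v x) := by
    intro x hxu hxv
    rcases htwin with h | h
    · have := Set.ext_iff.mp h x
      simpa [hxu, hxv] using this
    · have := Set.ext_iff.mp h x
      simpa using this
  have twin' : ∀ x, x ≠ v → x ≠ u → (G.Adj v x ↔ G.Adj u x) := fun x hxv hxu =>
    (twin x hxu hxv).symm
  constructor
  · rintro ⟨S, hS, hSw⟩
    -- Step 1: get a solution containing both or neither of u, v
    have step : ∃ T : Finset V, IsTwoClubCluster (G.induce ((↑T : Set V)ᶜ)) ∧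
        ∑ x ∈ T, w x ≤ k ∧ (u ∈ T ↔ v ∈ T) := by
      by_cases huS : u ∈ S
      · by_cases hvS : v ∈ S
        · exact ⟨S, hS, hSw, by simp [huS, hvS]⟩
        · -- erase u : add u back using twin v
          refine ⟨S.erase u, ?_, le_trans (Finset.sum_le_sum_of_subset (S.erase_subset u)) hSw,
            by simp [huS, hvS]⟩
          have hset : ((↑(S.erase u) : Set V))ᶜ = (↑S : Set V)ᶜ ∪ {u} := by
            ext x
            by_cases hxu : x = u <;> simp [hxu, huS, Finset.mem_erase]
          rw [hset]
          exact tcc_add_twin G v u (Ne.symm huv) twin' _ (by simpa using hvS)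
            (by simpa using huS) hS
      · by_cases hvS : v ∈ S
        · refine ⟨S.erase v, ?_, le_trans (Finset.sum_le_sum_of_subset (S.erase_subset v)) hSw,
            by simp [huS, hvS]⟩
          have hset : ((↑(S.erase v) : Set V))ᶜ = (↑S : Set V)ᶜ ∪ {v} := by
            ext x
            by_cases hxv : x = v <;> simp [hxv, hvS, Finset.mem_erase]
          rw [hset]
          exact tcc_add_twin G u v huv twin _ (by simpa using huS) (by simpa using hvS) hS
        · exact ⟨S, hS, hSw, by simp [huS, hvS]⟩
    obtain ⟨T, hT, hTw, hTuv⟩ := step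
    refine ⟨T.subtype (· ≠ v), ?_, ?_⟩
    · refine (tcc_induce_induce G {x : V | x ≠ v}
        ({y | y ∈ T.subtype (fun x => x ≠ v)}ᶜ)).mpr ?_
      have hset : {x : V | ∃ h : x ∈ {x : V | x ≠ v},
          (⟨x, h⟩ : {x : V | x ≠ v}) ∈ ({y | y ∈ T.subtype (· ≠ v)}ᶜ : Set {x : V | x ≠ v})} =
          {x : V | x ≠ v ∧ x ∉ T} := by
        ext x
        simp [Finset.mem_subtype]
        exact ⟨fun ⟨h1, h2⟩ => ⟨h1, h2⟩, fun ⟨h1, h2⟩ => ⟨h1, h2⟩⟩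
      rw [hset]
      by_cases hvT : v ∈ T
      · have : {x : V | x ≠ v ∧ x ∉ T} = ((↑T : Set V))ᶜ := by
          ext x
          simp only [Set.mem_setOf_eq, Set.mem_compl_iff, Finset.coe_sort_coe, Finset.mem_coe]
          exact ⟨fun h => h.2, fun h => ⟨fun hx => h (by rwa [← hx] at hvT), h⟩⟩
        rw [this]; exact hT
      · have huT : u ∉ T := fun h => hvT (hTuv.mp h)
        have : {x : V | x ≠ v ∧ x ∉ T} = ((↑T : Set V))ᶜ \ {v} := by
          ext x
          simp only [Set.mem_setOf_eq, Set.mem_diff, Set.mem_compl_iff, Finset.mem_coe,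
            Set.mem_singleton_iff]
          tauto
        rw [this]
        exact tcc_del_twin G u v huv twin _ (by simpa using huT) (by simpa using hvT) hT
    · have hsum : ∑ x ∈ T.subtype (· ≠ v), (if (x : V) = u then w u + w v else w (x : V)) =
          ∑ x ∈ T.filter (· ≠ v), (if x = u then w u + w v else w x) := by
        rw [← Finset.subtype_map (p := (· ≠ v)), Finset.sum_map]; rfl
      rw [hsum]
      by_cases hvT : v ∈ T
      · have huT : u ∈ T := hTuv.mpr hvT
        have hfe : T.filter (· ≠ v) = T.erase v := by
          ext x; simp [Finset.mem_erase, and_comm]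
        rw [hfe]
        have huTe : u ∈ T.erase v := Finset.mem_erase.mpr ⟨huv, huT⟩
        calc ∑ x ∈ T.erase v, (if x = u then w u + w v else w x)
            = (if u = u then w u + w v else w u) +
              ∑ x ∈ (T.erase v).erase u, (if x = u then w u + w v else w x) :=
              (Finset.add_sum_erase _ _ huTe).symm
          _ = (w u + w v) + ∑ x ∈ (T.erase v).erase u, w x := by
              rw [if_pos rfl]
              congr 1
              refine Finset.sum_congr rfl ?_
              intro x hx
              rw [if_neg (Finset.mem_erase.mp hx).1]
          _ = w v + (w u + ∑ x ∈ (T.erase v).erase u, w x) := by ring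
          _ = w v + ∑ x ∈ T.erase v, w x := by rw [Finset.add_sum_erase _ _ huTe]
          _ = ∑ x ∈ T, w x := Finset.add_sum_erase _ _ hvT
          _ ≤ k := hTw
      · have huT : u ∉ T := fun h => hvT (hTuv.mp h)
        have hfe : T.filter (· ≠ v) = T := by
          refine Finset.filter_true_of_mem ?_
          intro x hx
          exact fun hxv => hvT (by rwa [hxv] at hx)
        rw [hfe]
        calc ∑ x ∈ T, (if x = u then w u + w v else w x) = ∑ x ∈ T, w x := by
              refine Finset.sum_congr rfl ?_
              intro x hx
              rw [if_neg (fun hxu => huT (by rwa [hxu] at hx))]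
          _ ≤ k := hTw
  · rintro ⟨S', hS', hS'w⟩
    set T0 : Finset V := S'.map (Function.Embedding.subtype _) with hT0
    have hmemT0 : ∀ y : {x : V // x ≠ v}, (↑y ∈ T0) ↔ y ∈ S' := by
      intro y
      rw [hT0]
      exact Finset.mem_map' (Function.Embedding.subtype _)
    have hvT0 : v ∉ T0 := by
      intro h
      rw [hT0, Finset.mem_map] at h
      obtain ⟨y, _, hy⟩ := h
      exact y.2 (by simpa [Function.Embedding.coe_subtype] using hy)
    have hD : IsTwoClubCluster (G.induce {x : V | x ≠ v ∧ x ∉ T0}) := by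
      have hS'2 := (tcc_induce_induce G {x : V | x ≠ v} ({y | y ∈ S'}ᶜ)).mp hS'
      have hset : {x : V | ∃ h : x ∈ {x : V | x ≠ v},
          (⟨x, h⟩ : {x : V | x ≠ v}) ∈ ({y | y ∈ S'}ᶜ : Set {x : V | x ≠ v})} =
          {x : V | x ≠ v ∧ x ∉ T0} := by
        ext x
        constructor
        · rintro ⟨h1, h2⟩
          exact ⟨h1, fun hx => h2 ((hmemT0 ⟨x, h1⟩).mp hx)⟩
        · rintro ⟨h1, h2⟩
          exact ⟨h1, fun hx => h2 ((hmemT0 ⟨x, h1⟩).mpr hx)⟩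
      rwa [hset] at hS'2
    have hsum0 : ∑ x ∈ S', (if (x : V) = u then w u + w v else w (x : V)) =
        ∑ x ∈ T0, (if x = u then w u + w v else w x) := by
      rw [hT0, Finset.sum_map]; rfl
    by_cases huT0 : u ∈ T0
    · refine ⟨insert v T0, ?_, ?_⟩
      · have hset : ((↑(insert v T0) : Set V))ᶜ = {x : V | x ≠ v ∧ x ∉ T0} := by
          ext x; simp [not_or]
        rw [hset]; exact hD
      · rw [Finset.sum_insert hvT0]
        have : ∑ x ∈ T0, (if x = u then w u + w v else w x) = w v + ∑ x ∈ T0, w x := by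
          calc ∑ x ∈ T0, (if x = u then w u + w v else w x)
              = (if u = u then w u + w v else w u) +
                ∑ x ∈ T0.erase u, (if x = u then w u + w v else w x) :=
                (Finset.add_sum_erase _ _ huT0).symm
            _ = (w u + w v) + ∑ x ∈ T0.erase u, w x := by
                rw [if_pos rfl]
                congr 1
                refine Finset.sum_congr rfl ?_
                intro x hx
                rw [if_neg (Finset.mem_erase.mp hx).1]
            _ = w v + (w u + ∑ x ∈ T0.erase u, w x) := by ring
            _ = w v + ∑ x ∈ T0, w x := by rw [Finset.add_sum_erase _ _ huT0]
        rw [hsum0, this] at hS'w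
        exact hS'w
    · refine ⟨T0, ?_, ?_⟩
      · have hset : ((↑T0 : Set V))ᶜ = {x : V | x ≠ v ∧ x ∉ T0} ∪ {v} := by
          ext x
          by_cases hxv : x = v
          · subst hxv; simp [hvT0]
          · simp [hxv]
        rw [hset]
        exact tcc_add_twin G u v huv twin _ ⟨huv, huT0⟩ (by simp) hD
      · rw [hsum0] at hS'w
        calc ∑ x ∈ T0, w x = ∑ x ∈ T0, (if x = u then w u + w v else w x) := by
              refine Finset.sum_congr rfl ?_
              intro x hx
              rw [if_neg (fun hxu => huT0 (by rwa [hxu] at hx))]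
          _ ≤ k := hS'w
end

section
/- Let v be a cut vertex of a connected graph G that is not a bridge vertex (i.e., there exist no vertices s,v' ∈ N(v) that are the endpoints of an induced P4 in G). Let C be a connected component of G−v such that G[C] is a 2-club, and suppose all vertex weights in C are at least w(v). Then for every 2-club vertex deletion set S of G with S ∩ C ≠ ∅ and v ∉ S, the set S' = (S ∖ C) ∪ {v} is also a 2-club vertex deletion set with w(S') ≤ w(S). -/
open SimpleGraph

/-- An induced P4: a path s-t-u-v on four distinct vertices with no chords. -/
def IsInducedP4 {V : Type*} (G : SimpleGraph V) (s t u v : V) : Prop :=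
  s ≠ t ∧ s ≠ u ∧ s ≠ v ∧ t ≠ u ∧ t ≠ v ∧ u ≠ v ∧
  G.Adj s t ∧ G.Adj t u ∧ G.Adj u v ∧ ¬ G.Adj s u ∧ ¬ G.Adj s v ∧ ¬ G.Adj t v

lemma walk_two_aux {V : Type*} {G : SimpleGraph V} {x y : V} (p : G.Walk x y) (h : p.length ≤ 2) :
    x = y ∨ G.Adj x y ∨ ∃ z, G.Adj x z ∧ G.Adj z y := by
  match p with
  | .nil => exact Or.inl rfl
  | .cons h1 .nil => exact Or.inr (Or.inl h1)
  | .cons h1 (.cons h2 .nil) => exact Or.inr (Or.inr ⟨_, h1, h2⟩)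
  | .cons h1 (.cons h2 (.cons h3 q)) => simp [SimpleGraph.Walk.length_cons] at h

lemma walk_three_aux {V : Type*} {G : SimpleGraph V} {x y : V} (p : G.Walk x y) (h : p.length = 3) :
    ∃ t u, G.Adj x t ∧ G.Adj t u ∧ G.Adj u y := by
  match p with
  | .nil => simp at h
  | .cons h1 .nil => simp at h
  | .cons h1 (.cons h2 .nil) => simp at h
  | .cons h1 (.cons h2 (.cons h3 q)) =>
    have hq : q.length = 0 := by simp only [SimpleGraph.Walk.length_cons] at h; omega
    have he := SimpleGraph.Walk.eq_of_length_eq_zero hq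
    subst he
    exact ⟨_, _, h1, h2, h3⟩

theorem stmt11 {V : Type*} [Fintype V] [DecidableEq V] (G : SimpleGraph V)
    (hG : G.Connected)
    (w : V → ℕ) (hw : ∀ x, 1 ≤ w x) (v : V)
    (hcut : ¬ (G.induce {x : V | x ≠ v}).Preconnected)
    (hnotbridge : ¬ ∃ s x t u : V, G.Adj v s ∧ G.Adj v x ∧ IsInducedP4 G s t u x)
    (C : Finset V) (hvC : v ∉ C)
    (hconn : (G.induce (↑C : Set V)).Connected)
    (hclosed : ∀ a ∈ C, ∀ b : V, G.Adj a b → b = v ∨ b ∈ C)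
    (h2club : IsTwoClub (G.induce (↑C : Set V)))
    (hwC : ∀ c ∈ C, w v ≤ w c)
    (S : Finset V) (hS : IsTwoClubCluster (G.induce ((↑S : Set V)ᶜ)))
    (hSC : (S ∩ C).Nonempty) (hvS : v ∉ S) :
    IsTwoClubCluster (G.induce ((↑(insert v (S \ C)) : Set V)ᶜ)) ∧
    ∑ x ∈ insert v (S \ C), w x ≤ ∑ x ∈ S, w x := by
  classical
  set T : Set V := (↑(insert v (S \ C)) : Set V)ᶜ with hTdef
  set H : SimpleGraph ↥T := G.induce T with hHdef
  have memT : ∀ a : V, a ∈ T ↔ a ≠ v ∧ (a ∈ S → a ∈ C) := by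
    intro a
    simp only [hTdef, Set.mem_compl_iff, Finset.coe_insert, Set.mem_insert_iff,
      Finset.mem_coe, Finset.mem_sdiff, not_or, not_and, not_not]
  have memT_ne : ∀ a : ↥T, (a : V) ≠ v := fun a => ((memT a).mp a.2).1
  have memT_S : ∀ a : ↥T, (a : V) ∉ C → (a : V) ∉ S := by
    intro a hC hSa
    exact hC (((memT a).mp a.2).2 hSa)
  have CsubT : ∀ c ∈ C, c ∈ T := by
    intro c hc
    exact (memT c).mpr ⟨fun h => hvC (h ▸ hc), fun _ => hc⟩
  have hadjH : ∀ {a b : ↥T}, H.Adj a b ↔ G.Adj (a : V) (b : V) := by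
    intro a b; exact Iff.rfl
  have stepNC : ∀ (a b : ↥T), H.Adj a b → (a : V) ∉ C → (b : V) ∉ C := by
    intro a b hab ha hb
    rcases hclosed _ hb _ (hadjH.mp hab).symm with h | h
    · exact memT_ne a h
    · exact ha h
  have reachNC : ∀ (x y : ↥T), H.Reachable x y → (x : V) ∉ C → (y : V) ∉ C := by
    intro x y hr hx
    obtain ⟨p⟩ := hr
    induction p with
    | nil => exact hx
    | cons h q ih => exact ih (stepNC _ _ h hx)
  have reachC : ∀ (x y : ↥T), H.Reachable x y → (x : V) ∈ C → (y : V) ∈ C := by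
    intro x y hr hx
    by_contra hy
    exact (reachNC y x hr.symm hy) hx
  have toS : ∀ (a : ↥T), (a : V) ∉ C → (a : V) ∈ ((↑S : Set V)ᶜ) := by
    intro a ha
    exact memT_S a ha
  have key : ∀ (x y : ↥T) (hx : (x : V) ∉ C) (hy : (y : V) ∉ C), H.Reachable x y →
      (G.induce ((↑S : Set V)ᶜ)).Reachable ⟨x, toS x hx⟩ ⟨y, toS y hy⟩ := by
    intro x y hx hy hr
    obtain ⟨p⟩ := hr
    induction p with
    | nil => rfl
    | @cons a b c h q ih =>
      have hb : (b : V) ∉ C := stepNC _ _ h hx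
      have hadj : (G.induce ((↑S : Set V)ᶜ)).Adj ⟨a, toS a hx⟩ ⟨b, toS b hb⟩ := hadjH.mp h
      exact hadj.reachable.trans (ih hb hy)
  have common : ∀ (x y : ↥T), (x : V) ∉ C → H.Reachable x y → x ≠ y → ¬ H.Adj x y →
      (∃ z, H.Adj x z ∧ H.Adj z y) ∨ (G.Adj v (x : V) ∧ G.Adj v (y : V)) := by
    intro x y hx hr hne hnadj
    have hy : (y : V) ∉ C := reachNC x y hr hx
    have hreach := key x y hx hy hr
    have hdist := hS _ _ hreach
    obtain ⟨p, hp⟩ := hreach.exists_walk_length_eq_dist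
    rcases walk_two_aux p (hp ▸ hdist) with h | h | ⟨z, h1, h2⟩
    · exact absurd (Subtype.ext (Subtype.mk_eq_mk.mp h)) hne
    · exact absurd (hadjH.mpr h) hnadj
    · have g1 : G.Adj (x : V) (z : V) := h1
      have g2 : G.Adj (z : V) (y : V) := h2
      by_cases hzv : (z : V) = v
      · exact Or.inr ⟨(hzv ▸ g1).symm, hzv ▸ g2⟩
      · have hzC : (z : V) ∉ C := by
          intro hzC
          rcases hclosed _ hzC _ g2 with h | h
          · exact memT_ne y h
          · exact hy h
        have hzT : (z : V) ∈ T := (memT _).mpr ⟨hzv, fun hzS => absurd hzS z.2⟩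
        exact Or.inl ⟨⟨z, hzT⟩, hadjH.mpr g1, hadjH.mpr g2⟩
  -- no pair at distance exactly 3 among outside-C vertices
  have not3 : ∀ (x y : ↥T), (x : V) ∉ C → H.Reachable x y → H.dist x y ≠ 3 := by
    intro x y hx hr h3
    have hy : (y : V) ∉ C := reachNC x y hr hx
    have hne : x ≠ y := by
      intro h; subst h; rw [SimpleGraph.dist_self] at h3; omega
    have hnadj : ¬ H.Adj x y := by
      intro h
      have h1 : H.dist x y ≤ 1 := by simpa using SimpleGraph.dist_le h.toWalk
      omega
    obtain ⟨p, hp⟩ := hr.exists_walk_length_eq_dist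
    obtain ⟨t, u, a1, a2, a3⟩ := walk_three_aux p (hp.trans h3)
    -- no common neighbor, since dist = 3
    have hnocommon : ¬ ∃ z, H.Adj x z ∧ H.Adj z y := by
      rintro ⟨z, hz1, hz2⟩
      have : H.dist x y ≤ 2 := by
        simpa using SimpleGraph.dist_le (Walk.cons hz1 (Walk.cons hz2 Walk.nil))
      omega
    rcases common x y hx hr hne hnadj with h | ⟨hvx, hvy⟩
    · exact hnocommon h
    -- build induced P4 and contradict hnotbridge
    apply hnotbridge
    refine ⟨(x : V), (y : V), (t : V), (u : V), hvx, hvy, ?_⟩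
    have gxt : G.Adj (x : V) (t : V) := a1
    have gtu : G.Adj (t : V) (u : V) := a2
    have guy : G.Adj (u : V) (y : V) := a3
    have hxy : ¬ G.Adj (x : V) (y : V) := fun h => hnadj (hadjH.mpr h)
    have hxu : ¬ G.Adj (x : V) (u : V) := by
      intro h
      exact hnocommon ⟨u, hadjH.mpr h, a3⟩
    have hty : ¬ G.Adj (t : V) (y : V) := by
      intro h
      exact hnocommon ⟨t, a1, hadjH.mpr h⟩
    have hxney : (x : V) ≠ (y : V) := fun h => hne (Subtype.ext h)
    have hxnu : (x : V) ≠ (u : V) := by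
      intro h
      exact hxy (h ▸ guy)
    have htny : (t : V) ≠ (y : V) := by
      intro h
      exact hxy (h ▸ gxt)
    exact ⟨gxt.ne, hxnu, hxney, gtu.ne, htny, guy.ne, gxt, gtu, guy, hxu, hxy, hty⟩
  -- a pair at distance ≥ 3 yields a pair at distance exactly 3
  have find3 : ∀ (n : ℕ) (x y : ↥T), H.Reachable x y → H.dist x y = n → 3 ≤ n →
      ∃ (s z : ↥T), H.Reachable x s ∧ H.Reachable s z ∧ H.dist s z = 3 := by
    intro n
    induction n with
    | zero => intro x y _ _ h; omega
    | succ m ih =>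
      intro x y hr hd h3
      rcases Nat.eq_or_lt_of_le h3 with he | hlt
      · exact ⟨x, y, Reachable.refl x, hr, hd.trans he.symm⟩
      · obtain ⟨p, hp⟩ := hr.exists_walk_length_eq_dist
        match p, hp with
        | .nil, hp => rw [hd] at hp; simp at hp
        | .cons (v := b) hab q, hp =>
          have hq : q.length = m := by
            rw [hd] at hp; simpa [SimpleGraph.Walk.length_cons] using hp
          have hbr : H.Reachable b y := q.reachable
          have hdb : H.dist b y = m := by
            have hle : H.dist b y ≤ m := hq ▸ SimpleGraph.dist_le q
            have hge : m ≤ H.dist b y := by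
              by_contra hcon
              push_neg at hcon
              obtain ⟨q', hq'⟩ := hbr.exists_walk_length_eq_dist
              have : H.dist x y ≤ q'.length + 1 := by
                simpa [SimpleGraph.Walk.length_cons] using
                  SimpleGraph.dist_le (Walk.cons hab q')
              omega
            omega
          obtain ⟨s, z, hr1, hr2, hr3⟩ := ih b y hbr hdb (by omega)
          exact ⟨s, z, hab.reachable.trans hr1, hr2, hr3⟩
  constructor
  · -- the 2-club cluster property
    intro x y hr
    by_cases hx : (x : V) ∈ C
    · -- both in C: use h2club
      have hy : (y : V) ∈ C := reachC x y hr hx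
      by_cases hne : x = y
      · subst hne; simp [SimpleGraph.dist_self]
      · have hvne : (x : V) ≠ (y : V) := fun h => hne (Subtype.ext h)
        rcases h2club ⟨x, hx⟩ ⟨y, hy⟩ (fun h => hvne (Subtype.mk_eq_mk.mp h)) with h | ⟨z, h1, h2⟩
        · have : H.Adj x y := hadjH.mpr h
          calc H.dist x y ≤ 1 := by simpa using SimpleGraph.dist_le this.toWalk
          _ ≤ 2 := by omega
        · have gz1 : G.Adj (x : V) (z : V) := h1
          have gz2 : G.Adj (y : V) (z : V) := h2
          have hzT : (z : V) ∈ T := CsubT _ z.2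
          have e1 : H.Adj x ⟨z, hzT⟩ := hadjH.mpr gz1
          have e2 : H.Adj (⟨z, hzT⟩ : ↥T) y := hadjH.mpr gz2.symm
          simpa using SimpleGraph.dist_le (Walk.cons e1 (Walk.cons e2 Walk.nil))
    · -- both outside C
      by_contra hcon
      push_neg at hcon
      obtain ⟨s, z, hr1, hr2, h3⟩ := find3 (H.dist x y) x y hr rfl (by omega)
      exact not3 s z (reachNC x s hr1 hx) hr2 h3
  · -- weights
    obtain ⟨c, hc⟩ := hSC
    rw [Finset.mem_inter] at hc
    have hvnot : v ∉ S \ C := fun h => hvS (Finset.mem_sdiff.mp h).1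
    rw [Finset.sum_insert hvnot]
    have hsplit : ∑ x ∈ S \ (S ∩ C), w x + ∑ x ∈ S ∩ C, w x = ∑ x ∈ S, w x :=
      Finset.sum_sdiff (Finset.inter_subset_left)
    rw [Finset.sdiff_inter_self_left] at hsplit
    have hwv : w v ≤ ∑ x ∈ S ∩ C, w x := by
      calc w v ≤ w c := hwC c hc.2
      _ ≤ ∑ x ∈ S ∩ C, w x := Finset.single_le_sum (fun i _ => Nat.zero_le _) (Finset.mem_inter.mpr hc)
    omega
end

section
/- Consider the selection gadget: two stars with k+1 leaves each, whose center vertices c_L and c_R are joined by an edge. Any vertex deletion set S of size at most k such that every component of the remaining graph has diameter at most 2 must contain c_L or c_R. -/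
set_option maxHeartbeats 1000000


open SimpleGraph

theorem stmt12 {V : Type*} [Fintype V] [DecidableEq V] (G : SimpleGraph V) (k : ℕ)
    (cL cR : V) (L R : Finset V)
    (hL : L.card = k + 1) (hR : R.card = k + 1)
    (hcL : cL ∉ L ∧ cL ∉ R) (hcR : cR ∉ L ∧ cR ∉ R) (hLR : cL ≠ cR)
    (hdisj : Disjoint L R)
    (hadj : ∀ x y : V, G.Adj x y ↔
      ((x = cL ∧ y = cR) ∨ (x = cR ∧ y = cL) ∨
       (x = cL ∧ y ∈ L) ∨ (y = cL ∧ x ∈ L) ∨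
       (x = cR ∧ y ∈ R) ∨ (y = cR ∧ x ∈ R)))
    (S : Finset V) (hcard : S.card ≤ k)
    (hS : IsTwoClubCluster (G.induce ((↑S : Set V)ᶜ))) :
    cL ∈ S ∨ cR ∈ S := by
  by_contra hcon
  push_neg at hcon
  obtain ⟨hcLS, hcRS⟩ := hcon
  have hl : ∃ l ∈ L, l ∉ S := by
    by_contra h
    push_neg at h
    have := Finset.card_le_card (fun x hx => h x hx : L ⊆ S)
    omega
  have hr : ∃ r ∈ R, r ∉ S := by
    by_contra h
    push_neg at h
    have := Finset.card_le_card (fun x hx => h x hx : R ⊆ S)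
    omega
  obtain ⟨l, hlL, hlS⟩ := hl
  obtain ⟨r, hrR, hrS⟩ := hr
  have hlR : l ∉ R := fun h => (Finset.disjoint_left.mp hdisj hlL) h
  have hrL : r ∉ L := fun h => (Finset.disjoint_left.mp hdisj h) hrR
  have hlcL : l ≠ cL := fun h => hcL.1 (h ▸ hlL)
  have hlcR : l ≠ cR := fun h => hcR.1 (h ▸ hlL)
  have hrcL : r ≠ cL := fun h => hcL.2 (h ▸ hrR)
  have hrcR : r ≠ cR := fun h => hcR.2 (h ▸ hrR)
  have hlr : l ≠ r := fun h => hlR (h ▸ hrR)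
  have hlT : l ∈ ((↑S : Set V)ᶜ) := hlS
  have hrT : r ∈ ((↑S : Set V)ᶜ) := hrS
  have hcLT : cL ∈ ((↑S : Set V)ᶜ) := hcLS
  have hcRT : cR ∈ ((↑S : Set V)ᶜ) := hcRS
  set G' := G.induce ((↑S : Set V)ᶜ) with hG'
  have h1 : G'.Adj ⟨l, hlT⟩ ⟨cL, hcLT⟩ := by
    show G.Adj l cL
    rw [hadj]; tauto
  have h2 : G'.Adj ⟨cL, hcLT⟩ ⟨cR, hcRT⟩ := by
    show G.Adj cL cR
    rw [hadj]; tauto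
  have h3 : G'.Adj ⟨cR, hcRT⟩ ⟨r, hrT⟩ := by
    show G.Adj cR r
    rw [hadj]; tauto
  have hreach : G'.Reachable ⟨l, hlT⟩ ⟨r, hrT⟩ :=
    ⟨(h1.toWalk.append h2.toWalk).append h3.toWalk⟩
  have hdist := hS _ _ hreach
  have hnl : ∀ z : ((↑S : Set V)ᶜ : Set V), G'.Adj ⟨l, hlT⟩ z → (z : V) = cL := by
    intro z hz
    have hz' : G.Adj l z := hz
    rw [hadj] at hz'
    rcases hz' with ⟨h,_⟩|⟨h,_⟩|⟨h,_⟩|⟨h,_⟩|⟨h,_⟩|⟨h,hm⟩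
    · exact absurd h hlcL
    · exact absurd h hlcR
    · exact absurd h hlcL
    · exact h
    · exact absurd h hlcR
    · exact absurd hm hlR
  have hnr : ∀ z : ((↑S : Set V)ᶜ : Set V), G'.Adj z ⟨r, hrT⟩ → (z : V) = cR := by
    intro z hz
    have hz' : G.Adj r z := hz.symm
    rw [hadj] at hz'
    rcases hz' with ⟨h,_⟩|⟨h,_⟩|⟨h,_⟩|⟨_,hm⟩|⟨h,_⟩|⟨h,_⟩
    · exact absurd h hrcL
    · exact absurd h hrcR
    · exact absurd h hrcL
    · exact absurd hm hrL
    · exact absurd h hrcR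
    · exact h
  obtain ⟨p, hp⟩ := hreach.exists_walk_length_eq_dist
  rw [← hp] at hdist
  have hne : (⟨l, hlT⟩ : ((↑S : Set V)ᶜ : Set V)) ≠ ⟨r, hrT⟩ := by
    simp [Subtype.ext_iff, hlr]
  rcases (show p.length = 0 ∨ p.length = 1 ∨ p.length = 2 by omega) with h0|h1|h2
  · exact hne (SimpleGraph.Walk.eq_of_length_eq_zero h0)
  · have hadj01 := p.adj_getVert_succ (by omega : 0 < p.length)
    have hv1 : p.getVert 1 = ⟨r, hrT⟩ := by
      have := p.getVert_length; rwa [h1] at this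
    rw [p.getVert_zero, hv1] at hadj01
    exact hrcL (hnl _ hadj01)
  · have hadj01 := p.adj_getVert_succ (by omega : 0 < p.length)
    have hadj12 := p.adj_getVert_succ (by omega : 1 < p.length)
    have hv2 : p.getVert 2 = ⟨r, hrT⟩ := by
      have := p.getVert_length; rwa [h2] at this
    rw [p.getVert_zero] at hadj01
    rw [hv2] at hadj12
    have e1 := hnl _ hadj01
    have e2 := hnr _ hadj12
    exact hLR (e1 ▸ e2 ▸ rfl)
end

section
/- If C is a connected component of G that induces a 2-club, then S ⊆ V(G) is a minimum 2-club vertex deletion set of G if and only if S ∩ C = ∅ and S is a minimum 2-club vertex deletion set of G − C. In particular, (G,k) is a yes-instance of 2-Club Cluster Vertex Deletion if and only if (G−C, k) is. -/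
open SimpleGraph

section Aux

set_option linter.unusedSectionVars false

variable {V : Type*} [DecidableEq V] {G : SimpleGraph V} {c : G.ConnectedComponent}

/-- Lift a walk whose support lies in `A` to the induced graph. -/
lemma lift_walk {A : Set V} :
    ∀ {u v : V} (w : G.Walk u v) (_ : ∀ a ∈ w.support, a ∈ A) (hu : u ∈ A) (hv : v ∈ A),
      ∃ w' : (G.induce A).Walk ⟨u, hu⟩ ⟨v, hv⟩, w'.length = w.length := by
  intro u v w
  induction w with
  | nil => intro _ hu hv; exact ⟨.nil, rfl⟩
  | @cons u b v h p ih =>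
    intro hw hu hv
    have hb : b ∈ A := hw b (by simp [Walk.support_cons, p.start_mem_support])
    obtain ⟨w', hw'⟩ := ih (fun a ha => hw a (by simp [Walk.support_cons, ha])) hb hv
    exact ⟨.cons (by exact h) w', by show w'.length + 1 = p.length + 1; rw [hw']⟩

lemma not_supp_of_mem_support {u v a : V} (w : G.Walk u v) (ha : a ∈ w.support)
    (hu : u ∉ c.supp) : a ∉ c.supp := by
  intro hac
  apply hu
  rw [ConnectedComponent.mem_supp_iff] at hac ⊢
  rw [← hac]
  exact ConnectedComponent.sound (w.takeUntil a ha).reachable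

lemma transfer {A₁ A₂ : Set V} (h : ∀ v, v ∉ c.supp → v ∈ A₁ → v ∈ A₂)
    {x y : V} (hx1 : x ∈ A₁) (hy1 : y ∈ A₁) (hxc : x ∉ c.supp) (hx2 : x ∈ A₂) (hy2 : y ∈ A₂)
    (hr : (G.induce A₁).Reachable ⟨x, hx1⟩ ⟨y, hy1⟩) :
    (G.induce A₂).Reachable ⟨x, hx2⟩ ⟨y, hy2⟩ ∧
      (G.induce A₂).dist ⟨x, hx2⟩ ⟨y, hy2⟩ ≤ (G.induce A₁).dist ⟨x, hx1⟩ ⟨y, hy1⟩ := by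
  obtain ⟨w₁, hw₁⟩ := hr.exists_walk_length_eq_dist
  let w₀ := w₁.map (SimpleGraph.Embedding.induce A₁).toHom
  have hsup : ∀ a ∈ w₀.support, a ∈ A₂ := by
    intro a ha
    have h1 : a ∈ A₁ := by
      rw [Walk.support_map, List.mem_map] at ha
      obtain ⟨b, _, rfl⟩ := ha
      exact b.2
    exact h a (not_supp_of_mem_support w₀ ha hxc) h1
  obtain ⟨w₂, hw₂⟩ := lift_walk w₀ hsup hx2 hy2
  refine ⟨w₂.reachable, ?_⟩
  calc (G.induce A₂).dist ⟨x, hx2⟩ ⟨y, hy2⟩ ≤ w₂.length := dist_le w₂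
    _ = w₁.length := by rw [hw₂]; simp only [w₀]; exact Walk.length_map _ _
    _ = _ := hw₁

lemma club_dist (h2 : IsTwoClub (G.induce c.supp)) {A : Set V} (hA : c.supp ⊆ A)
    {x y : ↥A} (hx : ↑x ∈ c.supp) (hy : ↑y ∈ c.supp) : (G.induce A).dist x y ≤ 2 := by
  by_cases hxy : x = y
  · rw [hxy]; simp [SimpleGraph.dist_self]
  · have hne : (⟨↑x, hx⟩ : ↥c.supp) ≠ ⟨↑y, hy⟩ := by
      intro h; exact hxy (Subtype.ext (congrArg (Subtype.val : ↥c.supp → V) h))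
    rcases h2 ⟨↑x, hx⟩ ⟨↑y, hy⟩ hne with h | ⟨z, hz1, hz2⟩
    · have : (G.induce A).Adj x y := h
      calc (G.induce A).dist x y ≤ (Walk.cons this Walk.nil).length := dist_le _
        _ ≤ 2 := by simp
    · have hzA : (z : V) ∈ A := hA z.2
      let w : (G.induce A).Walk x y :=
        Walk.cons (show (G.induce A).Adj x ⟨↑z, hzA⟩ from hz1)
          (Walk.cons (show (G.induce A).Adj ⟨↑z, hzA⟩ y from hz2.symm) Walk.nil)
      calc (G.induce A).dist x y ≤ w.length := dist_le w
        _ ≤ 2 := by simp [w]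

lemma reach_comp_eq {A : Set V} {x y : ↥A} (hr : (G.induce A).Reachable x y) :
    G.connectedComponentMk ↑x = G.connectedComponentMk ↑y :=
  ConnectedComponent.sound (hr.map (SimpleGraph.Embedding.induce A).toHom)

lemma cluster_iff (h2 : IsTwoClub (G.induce c.supp)) {A : Set V} (hA : c.supp ⊆ A) :
    IsTwoClubCluster (G.induce A) ↔ IsTwoClubCluster (G.induce (A \ c.supp)) := by
  constructor
  · intro h x y hr
    have hxc : (x : V) ∉ c.supp := x.2.2
    have h1 : ∀ v, v ∉ c.supp → v ∈ A \ c.supp → v ∈ A := fun v _ hv => hv.1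
    have h2' : ∀ v, v ∉ c.supp → v ∈ A → v ∈ A \ c.supp := fun v hv hva => ⟨hva, hv⟩
    obtain ⟨hr', _⟩ := transfer h1 x.2 y.2 hxc x.2.1 y.2.1 hr
    have hd := h _ _ hr'
    obtain ⟨_, hle⟩ := transfer h2' x.2.1 y.2.1 hxc x.2 y.2 hr'
    calc (G.induce (A \ c.supp)).dist x y = (G.induce (A \ c.supp)).dist ⟨↑x, x.2⟩ ⟨↑y, y.2⟩ := rfl
      _ ≤ _ := hle
      _ ≤ 2 := hd
  · intro h x y hr
    by_cases hxc : (x : V) ∈ c.supp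
    · have hyc : (y : V) ∈ c.supp := by
        rw [ConnectedComponent.mem_supp_iff] at hxc ⊢
        exact (reach_comp_eq hr).symm.trans hxc
      exact club_dist h2 hA hxc hyc
    · have hyc : (y : V) ∉ c.supp := by
        intro hyc
        apply hxc
        rw [ConnectedComponent.mem_supp_iff] at hyc ⊢
        exact (reach_comp_eq hr).trans hyc
      have h1 : ∀ v, v ∉ c.supp → v ∈ A → v ∈ A \ c.supp := fun v hv hva => ⟨hva, hv⟩
      have h2' : ∀ v, v ∉ c.supp → v ∈ A \ c.supp → v ∈ A := fun v _ hv => hv.1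
      obtain ⟨hr', _⟩ := transfer h1 x.2 y.2 hxc ⟨x.2, hxc⟩ ⟨y.2, hyc⟩ hr
      have hd := h _ _ hr'
      obtain ⟨_, hle⟩ := transfer h2' ⟨x.2, hxc⟩ ⟨y.2, hyc⟩ hxc x.2 y.2 hr'
      calc (G.induce A).dist x y = (G.induce A).dist ⟨↑x, x.2⟩ ⟨↑y, y.2⟩ := rfl
        _ ≤ _ := hle
        _ ≤ 2 := hd

lemma cluster_union (h2 : IsTwoClub (G.induce c.supp)) {A : Set V}
    (h : IsTwoClubCluster (G.induce A)) : IsTwoClubCluster (G.induce (A ∪ c.supp)) := by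
  intro x y hr
  by_cases hxc : (x : V) ∈ c.supp
  · have hyc : (y : V) ∈ c.supp := by
      rw [ConnectedComponent.mem_supp_iff] at hxc ⊢
      exact (reach_comp_eq hr).symm.trans hxc
    exact club_dist h2 Set.subset_union_right hxc hyc
  · have hyc : (y : V) ∉ c.supp := by
      intro hyc
      apply hxc
      rw [ConnectedComponent.mem_supp_iff] at hyc ⊢
      exact (reach_comp_eq hr).trans hyc
    have hxA : (x : V) ∈ A := x.2.resolve_right hxc
    have hyA : (y : V) ∈ A := y.2.resolve_right hyc
    have h1 : ∀ v, v ∉ c.supp → v ∈ A ∪ c.supp → v ∈ A := fun v hv hva => hva.resolve_right hv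
    have h2' : ∀ v, v ∉ c.supp → v ∈ A → v ∈ A ∪ c.supp := fun v _ hv => Or.inl hv
    obtain ⟨hr', _⟩ := transfer h1 x.2 y.2 hxc hxA hyA hr
    have hd := h _ _ hr'
    obtain ⟨_, hle⟩ := transfer h2' hxA hyA hxc x.2 y.2 hr'
    calc (G.induce (A ∪ c.supp)).dist x y
        = (G.induce (A ∪ c.supp)).dist ⟨↑x, x.2⟩ ⟨↑y, y.2⟩ := rfl
      _ ≤ _ := hle
      _ ≤ 2 := hd

noncomputable def doubleIso {D : Set V} (B : Set ↥D) :
    (G.induce D).induce B ≃g G.induce (Subtype.val '' B) where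
  toEquiv := Equiv.Set.image Subtype.val B Subtype.val_injective
  map_rel_iff' := by
    intro a b
    simp only [Equiv.Set.image, Equiv.Set.imageOfInjOn]
    rfl

lemma cluster_of_iso {W W' : Type*} {H : SimpleGraph W} {H' : SimpleGraph W'} (φ : H ≃g H')
    (h : IsTwoClubCluster H) : IsTwoClubCluster H' := by
  intro x y hr
  have hr' : H.Reachable (φ.symm x) (φ.symm y) := by
    have := hr.map φ.symm.toHom
    simpa using this
  obtain ⟨w, hw⟩ := hr'.exists_walk_length_eq_dist
  have hd := h _ _ hr'
  have : H'.dist x y ≤ w.length := by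
    have := dist_le ((w.map φ.toHom).copy (φ.apply_symm_apply x) (φ.apply_symm_apply y))
    simpa [Walk.length_map] using this
  omega

end Aux

theorem stmt18 {V : Type*} [Fintype V] [DecidableEq V] (G : SimpleGraph V)
    (c : G.ConnectedComponent) (h2 : IsTwoClub (G.induce c.supp)) :
    (∀ S : Finset V,
      (IsTwoClubCluster (G.induce ((↑S : Set V)ᶜ)) ∧
        ∀ T : Finset V, IsTwoClubCluster (G.induce ((↑T : Set V)ᶜ)) → S.card ≤ T.card) ↔
      ((↑S : Set V) ∩ c.supp = ∅ ∧
        IsTwoClubCluster ((G.induce c.suppᶜ).induce ({x : ↥c.suppᶜ | ↑x ∈ S}ᶜ)) ∧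
        ∀ T : Finset V, (↑T : Set V) ∩ c.supp = ∅ →
          IsTwoClubCluster ((G.induce c.suppᶜ).induce ({x : ↥c.suppᶜ | ↑x ∈ T}ᶜ)) →
          S.card ≤ T.card)) ∧
    (∀ k : ℕ,
      (∃ S : Finset V, S.card ≤ k ∧ IsTwoClubCluster (G.induce ((↑S : Set V)ᶜ))) ↔
      (∃ S : Finset V, (↑S : Set V) ∩ c.supp = ∅ ∧ S.card ≤ k ∧
        IsTwoClubCluster ((G.induce c.suppᶜ).induce ({x : ↥c.suppᶜ | ↑x ∈ S}ᶜ)))) := by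
  classical
  have hImage : ∀ S : Finset V,
      Subtype.val '' ({x : ↥c.suppᶜ | ↑x ∈ S}ᶜ) = (↑S : Set V)ᶜ \ c.supp := by
    intro S
    ext v
    constructor
    · rintro ⟨x, hx, rfl⟩
      exact ⟨hx, x.2⟩
    · rintro ⟨hvS, hvc⟩
      exact ⟨⟨v, hvc⟩, hvS, rfl⟩
  have key : ∀ S : Finset V, (↑S : Set V) ∩ c.supp = ∅ →
      (IsTwoClubCluster (G.induce ((↑S : Set V)ᶜ)) ↔
        IsTwoClubCluster ((G.induce c.suppᶜ).induce ({x : ↥c.suppᶜ | ↑x ∈ S}ᶜ))) := by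
    intro S hdisj
    have hA : c.supp ⊆ ((↑S : Set V))ᶜ := by
      intro v hv hvS
      exact absurd (Set.mem_inter hvS hv) (by rw [hdisj]; exact Set.notMem_empty v)
    rw [cluster_iff h2 hA, ← hImage S]
    exact ⟨cluster_of_iso (doubleIso _).symm, cluster_of_iso (doubleIso _)⟩
  -- filter construction
  have hfilter : ∀ S : Finset V, IsTwoClubCluster (G.induce ((↑S : Set V)ᶜ)) →
      ∃ S' : Finset V, S' ⊆ S ∧ (↑S' : Set V) ∩ c.supp = ∅ ∧
        IsTwoClubCluster (G.induce ((↑S' : Set V)ᶜ)) ∧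
        (∀ v ∈ (↑S : Set V) ∩ c.supp, S'.card < S.card) := by
    intro S hP
    refine ⟨S.filter (fun v => v ∉ c.supp), Finset.filter_subset _ _, ?_, ?_, ?_⟩
    · ext v; simp [Finset.mem_filter]
    · have hset : ((↑(S.filter (fun v => v ∉ c.supp)) : Set V))ᶜ = (↑S : Set V)ᶜ ∪ c.supp := by
        ext v; simp [Finset.mem_filter]; tauto
      rw [hset]
      exact cluster_union h2 hP
    · rintro v ⟨hvS, hvc⟩
      refine Finset.card_lt_card ?_
      rw [Finset.ssubset_iff_of_subset (Finset.filter_subset _ _)]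
      exact ⟨v, hvS, by simp [Finset.mem_filter]; intro _; exact (ConnectedComponent.mem_supp_iff c v).mp hvc⟩
  constructor
  · intro S
    constructor
    · rintro ⟨hP, hmin⟩
      have hdisj : (↑S : Set V) ∩ c.supp = ∅ := by
        by_contra hne
        rw [Set.eq_empty_iff_forall_notMem] at hne
        push_neg at hne
        obtain ⟨v, hv⟩ := hne
        obtain ⟨S', hsub, hdisj', hP', hlt⟩ := hfilter S hP
        exact absurd (hmin S' hP') (by have := hlt v hv; omega)
      refine ⟨hdisj, (key S hdisj).mp hP, fun T hTd hTQ => hmin T ((key T hTd).mpr hTQ)⟩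
    · rintro ⟨hdisj, hQ, hmin⟩
      refine ⟨(key S hdisj).mpr hQ, ?_⟩
      intro T hTP
      obtain ⟨T', hsub, hTd', hTP', _⟩ := hfilter T hTP
      calc S.card ≤ T'.card := hmin T' hTd' ((key T' hTd').mp hTP')
        _ ≤ T.card := Finset.card_le_card hsub
  · intro k
    constructor
    · rintro ⟨S, hk, hP⟩
      obtain ⟨S', hsub, hdisj', hP', _⟩ := hfilter S hP
      exact ⟨S', hdisj', le_trans (Finset.card_le_card hsub) hk, (key S' hdisj').mp hP'⟩
    · rintro ⟨S, hdisj, hk, hQ⟩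
      exact ⟨S, hk, (key S hdisj).mpr hQ⟩
end
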